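/- arXiv:0802.3327 — 2 statements merged into one kernel-verified Lean document; each statement's English description precedes it below -/
import Mathlib

section
/- Fix z = (x,y) ∈ ℝ^d × ℝ, a minimal true parameter θ⁰ with k⁰ units, a reparameterization (t, (q_j)) with q_j > 0 and group sums 1, a non-identifiable part ψ_t, and a direction h = Φ_t − Φ_t⁰. If φ is differentiable, then the function s ↦ f_{(Φ_t⁰ + s h, ψ_t)}(z)/f_{θ⁰}(z) is differentiable at s = 0 with derivative equal to e(z) · [β − β⁰ + Σ_{i=1}^{k⁰} sᵢ φ(bᵢ⁰ + wᵢ⁰ᵀx) + Σ_{i=1}^{k⁰} Σ_{j=t_{i−1}+1}^{t_i} q_j (b_j − bᵢ⁰) aᵢ⁰ φ'(bᵢ⁰ + wᵢ⁰ᵀx) + Σ_{i=1}^{k⁰} Σ_{j=t_{i−1}+1}^{t_i} q_j (w_j − wᵢ⁰)ᵀx aᵢ⁰ φ'(bᵢ⁰ + wᵢ⁰ᵀx) + Σ_{j=t_{k⁰}+1}^{k} a_j φ(b_j + w_jᵀx)], where e(z) := (y − F_{θ⁰}(x))/σ². -/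
open Finset
open scoped RealInnerProductSpace

/-- The true MLP regression function `F_{θ⁰}(x) = β⁰ + Σ_{i=1}^{k⁰} aᵢ⁰ φ(bᵢ⁰ + wᵢ⁰ᵀx)`
(groups indexed by `i ∈ {0, …, k⁰−1}`). -/
noncomputable def trueF {d : ℕ} (φ : ℝ → ℝ) (k0 : ℕ) (β0 : ℝ) (a0 b0 : ℕ → ℝ)
    (w0 : ℕ → EuclideanSpace ℝ (Fin d)) (x : EuclideanSpace ℝ (Fin d)) : ℝ :=
  β0 + ∑ i ∈ Finset.range k0, a0 i * φ (b0 i + ⟪w0 i, x⟫)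

/-- The reparameterized regression function along the segment `Φ_t⁰ + s·(Φ_t − Φ_t⁰)`,
with the non-identifiable part `ψ_t = ((q_j), tail (b_j, w_j))` held fixed: the bias is
`β⁰ + s(β−β⁰)`, within group `i` the unit `j` has parameters
`(bᵢ⁰ + s(b_j − bᵢ⁰), wᵢ⁰ + s(w_j − wᵢ⁰))` and output weight `(s·sᵢ + aᵢ⁰)·q_j`,
and the extra units `j ∈ [t_{k⁰}, k)` have output weights `s·a_j`. -/
noncomputable def repFPath {d : ℕ} (φ : ℝ → ℝ) (k0 k : ℕ) (t : ℕ → ℕ)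
    (β0 : ℝ) (a0 b0 : ℕ → ℝ) (w0 : ℕ → EuclideanSpace ℝ (Fin d))
    (qq : ℕ → ℝ) (β : ℝ) (bb sv aa : ℕ → ℝ) (ww : ℕ → EuclideanSpace ℝ (Fin d))
    (s : ℝ) (x : EuclideanSpace ℝ (Fin d)) : ℝ :=
  (β0 + s * (β - β0)) +
    ∑ i ∈ Finset.range k0, (s * sv i + a0 i) *
      ∑ j ∈ Finset.Ico (t i) (t (i + 1)),
        qq j * φ ((b0 i + s * (bb j - b0 i)) + ⟪w0 i + s • (ww j - w0 i), x⟫) +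
    ∑ j ∈ Finset.Ico (t k0) k, (s * aa j) * φ (bb j + ⟪ww j, x⟫)

/-- The model density with regression function `F`:
`(2πσ²)^{-1/2} exp(−(y − F(x))²/(2σ²)) q(x)`. -/
noncomputable def densF {d : ℕ} (σ2 : ℝ) (q : EuclideanSpace ℝ (Fin d) → ℝ)
    (F : EuclideanSpace ℝ (Fin d) → ℝ) (z : EuclideanSpace ℝ (Fin d) × ℝ) : ℝ :=
  (Real.sqrt (2 * Real.pi * σ2))⁻¹ *
    Real.exp (-(z.2 - F z.1) ^ 2 / (2 * σ2)) * q z.1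

private lemma affine_comp (φ D1φ : ℝ → ℝ) (hφ : ∀ u, HasDerivAt φ (D1φ u) u) (c m : ℝ) :
    HasDerivAt (fun s : ℝ => φ (c + s * m)) (D1φ c * m) 0 := by
  have h1 : HasDerivAt (fun s : ℝ => c + s * m) m 0 := by
    simpa using ((hasDerivAt_id (0:ℝ)).mul_const m).const_add c
  have h2 := (hφ (c + 0 * m)).comp 0 h1
  simp only [zero_mul, add_zero] at h2
  exact h2

/-- for fixed `z = (x,y)`, a minimal true parameter `θ⁰`, a
reparameterization `(t, (q_j))` and a direction `h = Φ_t − Φ_t⁰`, if `φ` is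
differentiable then `s ↦ f_{(Φ_t⁰ + s h, ψ_t)}(z)/f_{θ⁰}(z)` is differentiable at
`s = 0` with derivative `e(z)` times the displayed bracket. -/
theorem deriv_likelihood_ratio_at_zero {d : ℕ}
    (φ D1φ : ℝ → ℝ) (hφ : ∀ u, HasDerivAt φ (D1φ u) u)
    (σ2 : ℝ) (hσ2 : 0 < σ2)
    (q : EuclideanSpace ℝ (Fin d) → ℝ) (hq : ∀ x, 0 < q x)
    (k0 k : ℕ) (hk01 : 1 ≤ k0) (hk : k0 ≤ k)
    (β0 : ℝ) (a0 b0 : ℕ → ℝ) (w0 : ℕ → EuclideanSpace ℝ (Fin d))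
    (ha0 : ∀ i < k0, a0 i ≠ 0)
    (hdist : ∀ i < k0, ∀ i' < k0, i ≠ i' → (b0 i, w0 i) ≠ (b0 i', w0 i'))
    (t : ℕ → ℕ) (ht0 : t 0 = 0) (htmono : ∀ i < k0, t i < t (i + 1)) (htk : t k0 ≤ k)
    (qq : ℕ → ℝ) (hqq : ∀ j, 0 < qq j)
    (hqsum : ∀ i < k0, ∑ j ∈ Finset.Ico (t i) (t (i + 1)), qq j = 1)
    (β : ℝ) (bb sv aa : ℕ → ℝ) (ww : ℕ → EuclideanSpace ℝ (Fin d))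
    (z : EuclideanSpace ℝ (Fin d) × ℝ) :
    HasDerivAt
      (fun s => densF σ2 q (repFPath φ k0 k t β0 a0 b0 w0 qq β bb sv aa ww s) z /
        densF σ2 q (trueF φ k0 β0 a0 b0 w0) z)
      (((z.2 - trueF φ k0 β0 a0 b0 w0 z.1) / σ2) *
        ((β - β0) + (∑ i ∈ Finset.range k0, sv i * φ (b0 i + ⟪w0 i, z.1⟫)) +
          (∑ i ∈ Finset.range k0, ∑ j ∈ Finset.Ico (t i) (t (i + 1)),
            qq j * (bb j - b0 i) * a0 i * D1φ (b0 i + ⟪w0 i, z.1⟫)) +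
          (∑ i ∈ Finset.range k0, ∑ j ∈ Finset.Ico (t i) (t (i + 1)),
            qq j * ⟪ww j - w0 i, z.1⟫ * a0 i * D1φ (b0 i + ⟪w0 i, z.1⟫)) +
          ∑ j ∈ Finset.Ico (t k0) k, aa j * φ (bb j + ⟪ww j, z.1⟫)))
      0 := by
  set x := z.1 with hx
  set y := z.2 with hy
  set g : ℝ → ℝ := fun s => repFPath φ k0 k t β0 a0 b0 w0 qq β bb sv aa ww s x with hgdef
  set F0 : ℝ := trueF φ k0 β0 a0 b0 w0 x with hF0
  set B : ℝ := (β - β0) + (∑ i ∈ Finset.range k0, sv i * φ (b0 i + ⟪w0 i, x⟫)) +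
          (∑ i ∈ Finset.range k0, ∑ j ∈ Finset.Ico (t i) (t (i + 1)),
            qq j * (bb j - b0 i) * a0 i * D1φ (b0 i + ⟪w0 i, x⟫)) +
          (∑ i ∈ Finset.range k0, ∑ j ∈ Finset.Ico (t i) (t (i + 1)),
            qq j * ⟪ww j - w0 i, x⟫ * a0 i * D1φ (b0 i + ⟪w0 i, x⟫)) +
          ∑ j ∈ Finset.Ico (t k0) k, aa j * φ (bb j + ⟪ww j, x⟫) with hB
  -- rewrite g in affine form
  have hgeq : g = fun s => (β0 + s * (β - β0)) +
      ∑ i ∈ Finset.range k0, (s * sv i + a0 i) *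
        ∑ j ∈ Finset.Ico (t i) (t (i + 1)),
          qq j * φ ((b0 i + ⟪w0 i, x⟫) + s * ((bb j - b0 i) + (⟪ww j, x⟫ - ⟪w0 i, x⟫))) +
      ∑ j ∈ Finset.Ico (t k0) k, (s * aa j) * φ (bb j + ⟪ww j, x⟫) := by
    funext s
    simp only [hgdef, repFPath]
    congr 1
    congr 1
    refine Finset.sum_congr rfl fun i _ => ?_
    congr 1
    refine Finset.sum_congr rfl fun j _ => ?_
    congr 2
    rw [inner_add_left, real_inner_smul_left, inner_sub_left]
    ring
  -- g 0 = F0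
  have hg0 : g 0 = F0 := by
    rw [hgeq, hF0]
    simp only [trueF, zero_mul, zero_add, mul_zero, add_zero]
    rw [Finset.sum_const_zero, add_zero]
    congr 1
    refine Finset.sum_congr rfl fun i hi => ?_
    rw [← Finset.sum_mul, hqsum i (Finset.mem_range.mp hi), one_mul]
  -- derivative of g
  have hg : HasDerivAt g B 0 := by
    rw [hgeq]
    have h1 : HasDerivAt (fun s : ℝ => β0 + s * (β - β0)) (β - β0) 0 := by
      simpa using ((hasDerivAt_id (0:ℝ)).mul_const (β - β0)).const_add β0
    have h3 : HasDerivAt (fun s : ℝ => ∑ j ∈ Finset.Ico (t k0) k,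
        (s * aa j) * φ (bb j + ⟪ww j, x⟫))
        (∑ j ∈ Finset.Ico (t k0) k, aa j * φ (bb j + ⟪ww j, x⟫)) 0 := by
      refine HasDerivAt.fun_sum fun j hj => ?_
      simpa using ((hasDerivAt_id (0:ℝ)).mul_const (aa j)).mul_const (φ (bb j + ⟪ww j, x⟫))
    have hSi : ∀ i, HasDerivAt (fun s : ℝ => ∑ j ∈ Finset.Ico (t i) (t (i + 1)),
        qq j * φ ((b0 i + ⟪w0 i, x⟫) + s * ((bb j - b0 i) + (⟪ww j, x⟫ - ⟪w0 i, x⟫))))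
        (∑ j ∈ Finset.Ico (t i) (t (i + 1)),
          qq j * (D1φ (b0 i + ⟪w0 i, x⟫) * ((bb j - b0 i) + (⟪ww j, x⟫ - ⟪w0 i, x⟫)))) 0 :=
      fun i => HasDerivAt.fun_sum fun j hj =>
        (affine_comp φ D1φ hφ _ _).const_mul (qq j)
    have hlin : ∀ i, HasDerivAt (fun s : ℝ => s * sv i + a0 i) (sv i) 0 := by
      intro i
      simpa using ((hasDerivAt_id (0:ℝ)).mul_const (sv i)).add_const (a0 i)
    have hprod : ∀ i ∈ Finset.range k0, HasDerivAt
        (fun s : ℝ => (s * sv i + a0 i) *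
          ∑ j ∈ Finset.Ico (t i) (t (i + 1)),
            qq j * φ ((b0 i + ⟪w0 i, x⟫) + s * ((bb j - b0 i) + (⟪ww j, x⟫ - ⟪w0 i, x⟫))))
        (sv i * ∑ j ∈ Finset.Ico (t i) (t (i + 1)),
            qq j * φ ((b0 i + ⟪w0 i, x⟫) + (0:ℝ) * ((bb j - b0 i) + (⟪ww j, x⟫ - ⟪w0 i, x⟫))) +
         ((0:ℝ) * sv i + a0 i) * ∑ j ∈ Finset.Ico (t i) (t (i + 1)),
            qq j * (D1φ (b0 i + ⟪w0 i, x⟫) * ((bb j - b0 i) + (⟪ww j, x⟫ - ⟪w0 i, x⟫)))) 0 :=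
      fun i _ => (hlin i).mul (hSi i)
    have htot := (h1.add (HasDerivAt.fun_sum hprod)).add h3
    convert htot using 1
    case e'_4 => rfl
    case e'_5 => rfl
    case e'_8 => rfl
    simp only [zero_mul, zero_add, add_zero]
    rw [hB, Finset.sum_add_distrib]
    have e1 : ∀ i ∈ Finset.range k0,
        sv i * ∑ j ∈ Finset.Ico (t i) (t (i + 1)), qq j * φ (b0 i + ⟪w0 i, x⟫) =
        sv i * φ (b0 i + ⟪w0 i, x⟫) := by
      intro i hi
      rw [← Finset.sum_mul, hqsum i (Finset.mem_range.mp hi), one_mul]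
    have e2 : ∀ i ∈ Finset.range k0,
        a0 i * ∑ j ∈ Finset.Ico (t i) (t (i + 1)),
          qq j * (D1φ (b0 i + ⟪w0 i, x⟫) * ((bb j - b0 i) + (⟪ww j, x⟫ - ⟪w0 i, x⟫))) =
        (∑ j ∈ Finset.Ico (t i) (t (i + 1)),
          qq j * (bb j - b0 i) * a0 i * D1φ (b0 i + ⟪w0 i, x⟫)) +
        ∑ j ∈ Finset.Ico (t i) (t (i + 1)),
          qq j * ⟪ww j - w0 i, x⟫ * a0 i * D1φ (b0 i + ⟪w0 i, x⟫) := by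
      intro i hi
      rw [Finset.mul_sum, ← Finset.sum_add_distrib]
      refine Finset.sum_congr rfl fun j hj => ?_
      rw [inner_sub_left]
      ring
    rw [Finset.sum_congr rfl e1, Finset.sum_congr rfl e2, Finset.sum_add_distrib]
    ring
  -- derivative of the inner exponent
  have hu : HasDerivAt
      (fun s : ℝ => -(y - g s) ^ 2 / (2 * σ2) - -(y - F0) ^ 2 / (2 * σ2))
      ((y - F0) / σ2 * B) 0 := by
    have h := ((((hg.const_sub y).pow 2).neg).div_const (2 * σ2)).sub_const
      (-(y - F0) ^ 2 / (2 * σ2))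
    convert h using 1
    case e'_4 => rfl
    case e'_5 => rfl
    case e'_8 => rfl
    rw [hg0]
    field_simp
    ring
  have hexp := hu.exp
  have hval : -(y - g 0) ^ 2 / (2 * σ2) - -(y - F0) ^ 2 / (2 * σ2) = 0 := by
    rw [hg0, sub_self]
  -- rewrite the ratio as an exponential
  have hcne : (Real.sqrt (2 * Real.pi * σ2))⁻¹ ≠ 0 := by
    refine inv_ne_zero (ne_of_gt (Real.sqrt_pos.mpr ?_))
    positivity
  have hratio : (fun s => densF σ2 q (repFPath φ k0 k t β0 a0 b0 w0 qq β bb sv aa ww s) z /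
        densF σ2 q (trueF φ k0 β0 a0 b0 w0) z) =
      fun s => Real.exp (-(y - g s) ^ 2 / (2 * σ2) - -(y - F0) ^ 2 / (2 * σ2)) := by
    funext s
    simp only [densF]
    rw [mul_div_mul_right _ _ (ne_of_gt (hq z.1)),
      mul_div_mul_left _ _ hcne, ← Real.exp_sub]
  rw [hratio]
  convert hexp using 1
  rw [hval, Real.exp_zero, one_mul]
end

section
/- Fix z = (x,y) ∈ ℝ^d × ℝ, a minimal true parameter θ⁰ with k⁰ units, a reparameterization (t, (q_j)) with q_j > 0 and group sums 1, a non-identifiable part ψ_t, and a direction h = Φ_t − Φ_t⁰. If φ is twice differentiable, then the function s ↦ f_{(Φ_t⁰ + s h, ψ_t)}(z)/f_{θ⁰}(z) is twice differentiable at s = 0 and its second derivative at 0 equals (e(z)² − 1/σ²) · L(x)² + e(z) · Σ_{i=1}^{k⁰} Σ_{j=t_{i−1}+1}^{t_i} q_j [2 sᵢ Δ_{ij}(x) φ'(bᵢ⁰ + wᵢ⁰ᵀx) + aᵢ⁰ Δ_{ij}(x)² φ''(bᵢ⁰ + wᵢ⁰ᵀx)], where e(z) := (y − F_{θ⁰}(x))/σ²,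 Δ_{ij}(x) := (b_j − bᵢ⁰) + (w_j − wᵢ⁰)ᵀx, and L(x) := β − β⁰ + Σ_{i=1}^{k⁰} sᵢ φ(bᵢ⁰ + wᵢ⁰ᵀx) + Σ_{i=1}^{k⁰} Σ_{j=t_{i−1}+1}^{t_i} q_j Δ_{ij}(x) aᵢ⁰ φ'(bᵢ⁰ + wᵢ⁰ᵀx) + Σ_{j=t_{k⁰}+1}^{k} a_j φ(b_j + w_jᵀx). -/
open Finset
open scoped RealInnerProductSpace

/-- `Δ_{ij}(x) := (b_j − bᵢ⁰) + (w_j − wᵢ⁰)ᵀ x`. -/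
noncomputable def Δdiff {d : ℕ} (b0 : ℕ → ℝ) (w0 : ℕ → EuclideanSpace ℝ (Fin d))
    (bb : ℕ → ℝ) (ww : ℕ → EuclideanSpace ℝ (Fin d)) (i j : ℕ)
    (x : EuclideanSpace ℝ (Fin d)) : ℝ :=
  (bb j - b0 i) + ⟪ww j - w0 i, x⟫

/-- The linear form `L(x)` of the expansion. -/
noncomputable def linTerm {d : ℕ} (φ D1φ : ℝ → ℝ) (k0 k : ℕ) (t : ℕ → ℕ)
    (β0 : ℝ) (a0 b0 : ℕ → ℝ) (w0 : ℕ → EuclideanSpace ℝ (Fin d))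
    (qq : ℕ → ℝ) (β : ℝ) (bb sv aa : ℕ → ℝ) (ww : ℕ → EuclideanSpace ℝ (Fin d))
    (x : EuclideanSpace ℝ (Fin d)) : ℝ :=
  (β - β0) + (∑ i ∈ Finset.range k0, sv i * φ (b0 i + ⟪w0 i, x⟫)) +
    (∑ i ∈ Finset.range k0, ∑ j ∈ Finset.Ico (t i) (t (i + 1)),
      qq j * Δdiff b0 w0 bb ww i j x * a0 i * D1φ (b0 i + ⟪w0 i, x⟫)) +
    ∑ j ∈ Finset.Ico (t k0) k, aa j * φ (bb j + ⟪ww j, x⟫)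

section Aux

variable {d : ℕ} (φ D1φ D2φ : ℝ → ℝ) (k0 k : ℕ) (t : ℕ → ℕ)
  (β0 : ℝ) (a0 b0 : ℕ → ℝ) (w0 : ℕ → EuclideanSpace ℝ (Fin d))
  (qq : ℕ → ℝ) (β : ℝ) (bb sv aa : ℕ → ℝ) (ww : ℕ → EuclideanSpace ℝ (Fin d))
  (x : EuclideanSpace ℝ (Fin d))

noncomputable def gP (s : ℝ) : ℝ :=
  (β0 + s * (β - β0)) +
    ∑ i ∈ Finset.range k0, (s * sv i + a0 i) *
      ∑ j ∈ Finset.Ico (t i) (t (i + 1)),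
        qq j * φ ((b0 i + ⟪w0 i, x⟫) + s * Δdiff b0 w0 bb ww i j x) +
    ∑ j ∈ Finset.Ico (t k0) k, (s * aa j) * φ (bb j + ⟪ww j, x⟫)

noncomputable def gP1 (s : ℝ) : ℝ :=
  (β - β0) +
    ∑ i ∈ Finset.range k0,
      (sv i * ∑ j ∈ Finset.Ico (t i) (t (i + 1)),
          qq j * φ ((b0 i + ⟪w0 i, x⟫) + s * Δdiff b0 w0 bb ww i j x) +
        (s * sv i + a0 i) * ∑ j ∈ Finset.Ico (t i) (t (i + 1)),
          qq j * (D1φ ((b0 i + ⟪w0 i, x⟫) + s * Δdiff b0 w0 bb ww i j x) *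
            Δdiff b0 w0 bb ww i j x)) +
    ∑ j ∈ Finset.Ico (t k0) k, aa j * φ (bb j + ⟪ww j, x⟫)

noncomputable def gP2 (s : ℝ) : ℝ :=
  ∑ i ∈ Finset.range k0,
    (sv i * ∑ j ∈ Finset.Ico (t i) (t (i + 1)),
        qq j * (D1φ ((b0 i + ⟪w0 i, x⟫) + s * Δdiff b0 w0 bb ww i j x) *
          Δdiff b0 w0 bb ww i j x) +
      (sv i * ∑ j ∈ Finset.Ico (t i) (t (i + 1)),
          qq j * (D1φ ((b0 i + ⟪w0 i, x⟫) + s * Δdiff b0 w0 bb ww i j x) *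
            Δdiff b0 w0 bb ww i j x) +
        (s * sv i + a0 i) * ∑ j ∈ Finset.Ico (t i) (t (i + 1)),
          qq j * (D2φ ((b0 i + ⟪w0 i, x⟫) + s * Δdiff b0 w0 bb ww i j x) *
            Δdiff b0 w0 bb ww i j x * Δdiff b0 w0 bb ww i j x)))

theorem rep_eq' (s : ℝ) :
    (β0 + s * (β - β0)) +
    ∑ i ∈ Finset.range k0, (s * sv i + a0 i) *
      ∑ j ∈ Finset.Ico (t i) (t (i + 1)),
        qq j * φ ((b0 i + s * (bb j - b0 i)) + ⟪w0 i + s • (ww j - w0 i), x⟫) +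
    ∑ j ∈ Finset.Ico (t k0) k, (s * aa j) * φ (bb j + ⟪ww j, x⟫) =
    gP φ k0 k t β0 a0 b0 w0 qq β bb sv aa ww x s := by
  unfold gP
  congr 2
  refine Finset.sum_congr rfl fun i _ => ?_
  congr 1
  refine Finset.sum_congr rfl fun j _ => ?_
  congr 2
  rw [inner_add_left, real_inner_smul_left, Δdiff]
  ring

theorem gP_hasDerivAt (hφ1 : ∀ u, HasDerivAt φ (D1φ u) u) (s : ℝ) :
    HasDerivAt (gP φ k0 k t β0 a0 b0 w0 qq β bb sv aa ww x)
      (gP1 φ D1φ k0 k t β0 a0 b0 w0 qq β bb sv aa ww x s) s := by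
  unfold gP gP1
  refine HasDerivAt.add (HasDerivAt.add ?_ ?_) ?_
  · exact (hasDerivAt_mul_const (β - β0)).const_add β0
  · refine HasDerivAt.fun_sum fun i _ => ?_
    refine HasDerivAt.mul ((hasDerivAt_mul_const (sv i)).add_const (a0 i)) ?_
    refine HasDerivAt.fun_sum fun j _ => ?_
    exact ((hφ1 _).comp s
      ((hasDerivAt_mul_const (Δdiff b0 w0 bb ww i j x)).const_add _)).const_mul (qq j)
  · refine HasDerivAt.fun_sum fun j _ => ?_
    exact (hasDerivAt_mul_const (aa j)).mul_const _

theorem gP1_hasDerivAt (hφ1 : ∀ u, HasDerivAt φ (D1φ u) u)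
    (hφ2 : ∀ u, HasDerivAt D1φ (D2φ u) u) (s : ℝ) :
    HasDerivAt (gP1 φ D1φ k0 k t β0 a0 b0 w0 qq β bb sv aa ww x)
      (gP2 D1φ D2φ k0 t a0 b0 w0 qq bb sv ww x s) s := by
  unfold gP1 gP2
  refine (HasDerivAt.const_add _ ?_).add_const _
  refine HasDerivAt.fun_sum fun i _ => ?_
  refine HasDerivAt.add ?_ ?_
  · refine HasDerivAt.const_mul (sv i) ?_
    refine HasDerivAt.fun_sum fun j _ => ?_
    exact ((hφ1 _).comp s
      ((hasDerivAt_mul_const (Δdiff b0 w0 bb ww i j x)).const_add _)).const_mul (qq j)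
  · refine HasDerivAt.mul ((hasDerivAt_mul_const (sv i)).add_const (a0 i)) ?_
    refine HasDerivAt.fun_sum fun j _ => ?_
    refine HasDerivAt.const_mul (qq j) ?_
    exact (((hφ2 _).comp s
      ((hasDerivAt_mul_const (Δdiff b0 w0 bb ww i j x)).const_add _))).mul_const _

end Aux



section Aux2

variable {d : ℕ} (φ D1φ D2φ : ℝ → ℝ) (k0 k : ℕ) (t : ℕ → ℕ)
  (β0 : ℝ) (a0 b0 : ℕ → ℝ) (w0 : ℕ → EuclideanSpace ℝ (Fin d))
  (qq : ℕ → ℝ) (β : ℝ) (bb sv aa : ℕ → ℝ) (ww : ℕ → EuclideanSpace ℝ (Fin d))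
  (x : EuclideanSpace ℝ (Fin d))
  (hqsum : ∀ i < k0, ∑ j ∈ Finset.Ico (t i) (t (i + 1)), qq j = 1)

include hqsum in
theorem gP_zero :
    gP φ k0 k t β0 a0 b0 w0 qq β bb sv aa ww x 0 = trueF φ k0 β0 a0 b0 w0 x := by
  unfold gP trueF
  simp only [zero_mul, zero_add, add_zero, Finset.sum_const_zero]
  congr 1
  refine Finset.sum_congr rfl fun i hi => ?_
  rw [← Finset.sum_mul, hqsum i (Finset.mem_range.mp hi), one_mul]

include hqsum in
theorem gP1_zero :
    gP1 φ D1φ k0 k t β0 a0 b0 w0 qq β bb sv aa ww x 0 =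
      linTerm φ D1φ k0 k t β0 a0 b0 w0 qq β bb sv aa ww x := by
  unfold gP1 linTerm
  simp only [zero_mul, zero_add, add_zero]
  rw [Finset.sum_add_distrib]
  have h1 : (∑ i ∈ Finset.range k0,
      sv i * ∑ j ∈ Finset.Ico (t i) (t (i + 1)), qq j * φ (b0 i + ⟪w0 i, x⟫)) =
      ∑ i ∈ Finset.range k0, sv i * φ (b0 i + ⟪w0 i, x⟫) :=
    Finset.sum_congr rfl fun i hi => by
      rw [← Finset.sum_mul, hqsum i (Finset.mem_range.mp hi), one_mul]
  have h2 : (∑ i ∈ Finset.range k0,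
      a0 i * ∑ j ∈ Finset.Ico (t i) (t (i + 1)),
        qq j * (D1φ (b0 i + ⟪w0 i, x⟫) * Δdiff b0 w0 bb ww i j x)) =
      ∑ i ∈ Finset.range k0, ∑ j ∈ Finset.Ico (t i) (t (i + 1)),
        qq j * Δdiff b0 w0 bb ww i j x * a0 i * D1φ (b0 i + ⟪w0 i, x⟫) :=
    Finset.sum_congr rfl fun i _ => by
      rw [Finset.mul_sum]
      exact Finset.sum_congr rfl fun j _ => by ring
  rw [h1, h2]
  ring

theorem gP2_zero :
    gP2 D1φ D2φ k0 t a0 b0 w0 qq bb sv ww x 0 =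
      ∑ i ∈ Finset.range k0, ∑ j ∈ Finset.Ico (t i) (t (i + 1)),
        qq j * (2 * sv i * Δdiff b0 w0 bb ww i j x * D1φ (b0 i + ⟪w0 i, x⟫) +
          a0 i * Δdiff b0 w0 bb ww i j x ^ 2 * D2φ (b0 i + ⟪w0 i, x⟫)) := by
  unfold gP2
  simp only [zero_mul, zero_add, add_zero]
  refine Finset.sum_congr rfl fun i _ => ?_
  simp only [Finset.mul_sum]
  rw [← Finset.sum_add_distrib, ← Finset.sum_add_distrib]
  exact Finset.sum_congr rfl fun j _ => by ring

end Aux2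

/-- for fixed `z = (x,y)`, a minimal true parameter `θ⁰`, a
reparameterization `(t, (q_j))` and a direction `h = Φ_t − Φ_t⁰`, if `φ` is twice
differentiable then `s ↦ f_{(Φ_t⁰ + s h, ψ_t)}(z)/f_{θ⁰}(z)` is twice differentiable at
`s = 0`, with second derivative at `0` equal to `(e(z)² − 1/σ²) L(x)²` plus `e(z)` times
`Σᵢ Σ_j q_j [2 sᵢ Δ_{ij}(x) φ'(bᵢ⁰ + wᵢ⁰ᵀx) + aᵢ⁰ Δ_{ij}(x)² φ''(bᵢ⁰ + wᵢ⁰ᵀx)]`. -/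
theorem second_deriv_likelihood_ratio_at_zero {d : ℕ}
    (φ D1φ D2φ : ℝ → ℝ)
    (hφ1 : ∀ u, HasDerivAt φ (D1φ u) u) (hφ2 : ∀ u, HasDerivAt D1φ (D2φ u) u)
    (σ2 : ℝ) (hσ2 : 0 < σ2)
    (q : EuclideanSpace ℝ (Fin d) → ℝ) (hq : ∀ x, 0 < q x)
    (k0 k : ℕ) (hk01 : 1 ≤ k0) (hk : k0 ≤ k)
    (β0 : ℝ) (a0 b0 : ℕ → ℝ) (w0 : ℕ → EuclideanSpace ℝ (Fin d))
    (ha0 : ∀ i < k0, a0 i ≠ 0)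
    (hdist : ∀ i < k0, ∀ i' < k0, i ≠ i' → (b0 i, w0 i) ≠ (b0 i', w0 i'))
    (t : ℕ → ℕ) (ht0 : t 0 = 0) (htmono : ∀ i < k0, t i < t (i + 1)) (htk : t k0 ≤ k)
    (qq : ℕ → ℝ) (hqq : ∀ j, 0 < qq j)
    (hqsum : ∀ i < k0, ∑ j ∈ Finset.Ico (t i) (t (i + 1)), qq j = 1)
    (β : ℝ) (bb sv aa : ℕ → ℝ) (ww : ℕ → EuclideanSpace ℝ (Fin d))
    (z : EuclideanSpace ℝ (Fin d) × ℝ) :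
    (∀ s : ℝ, DifferentiableAt ℝ
      (fun u => densF σ2 q (repFPath φ k0 k t β0 a0 b0 w0 qq β bb sv aa ww u) z /
        densF σ2 q (trueF φ k0 β0 a0 b0 w0) z) s) ∧
    HasDerivAt
      (deriv (fun u => densF σ2 q (repFPath φ k0 k t β0 a0 b0 w0 qq β bb sv aa ww u) z /
        densF σ2 q (trueF φ k0 β0 a0 b0 w0) z))
      ((((z.2 - trueF φ k0 β0 a0 b0 w0 z.1) / σ2) ^ 2 - 1 / σ2) *
          (linTerm φ D1φ k0 k t β0 a0 b0 w0 qq β bb sv aa ww z.1) ^ 2 +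
        ((z.2 - trueF φ k0 β0 a0 b0 w0 z.1) / σ2) *
          ∑ i ∈ Finset.range k0, ∑ j ∈ Finset.Ico (t i) (t (i + 1)),
            qq j * (2 * sv i * Δdiff b0 w0 bb ww i j z.1 * D1φ (b0 i + ⟪w0 i, z.1⟫) +
              a0 i * Δdiff b0 w0 bb ww i j z.1 ^ 2 * D2φ (b0 i + ⟪w0 i, z.1⟫)))
      0 := by
  set G : ℝ → ℝ := gP φ k0 k t β0 a0 b0 w0 qq β bb sv aa ww z.1 with hGdef
  set G1 : ℝ → ℝ := gP1 φ D1φ k0 k t β0 a0 b0 w0 qq β bb sv aa ww z.1 with hG1def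
  set G2 : ℝ → ℝ := gP2 D1φ D2φ k0 t a0 b0 w0 qq bb sv ww z.1 with hG2def
  have hG : ∀ s, HasDerivAt G (G1 s) s := fun s =>
    gP_hasDerivAt φ D1φ k0 k t β0 a0 b0 w0 qq β bb sv aa ww z.1 hφ1 s
  have hG1 : ∀ s, HasDerivAt G1 (G2 s) s := fun s =>
    gP1_hasDerivAt φ D1φ D2φ k0 k t β0 a0 b0 w0 qq β bb sv aa ww z.1 hφ1 hφ2 s
  have hG0 : G 0 = trueF φ k0 β0 a0 b0 w0 z.1 :=
    gP_zero φ k0 k t β0 a0 b0 w0 qq β bb sv aa ww z.1 hqsum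
  have hG10 : G1 0 = linTerm φ D1φ k0 k t β0 a0 b0 w0 qq β bb sv aa ww z.1 :=
    gP1_zero φ D1φ k0 k t β0 a0 b0 w0 qq β bb sv aa ww z.1 hqsum
  have hG20 : G2 0 = ∑ i ∈ Finset.range k0, ∑ j ∈ Finset.Ico (t i) (t (i + 1)),
      qq j * (2 * sv i * Δdiff b0 w0 bb ww i j z.1 * D1φ (b0 i + ⟪w0 i, z.1⟫) +
        a0 i * Δdiff b0 w0 bb ww i j z.1 ^ 2 * D2φ (b0 i + ⟪w0 i, z.1⟫)) :=
    gP2_zero D1φ D2φ k0 t a0 b0 w0 qq bb sv ww z.1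
  have key : (fun u => densF σ2 q (repFPath φ k0 k t β0 a0 b0 w0 qq β bb sv aa ww u) z /
      densF σ2 q (trueF φ k0 β0 a0 b0 w0) z) =
      fun u => Real.exp (-(z.2 - G u) ^ 2 / (2 * σ2) - -(z.2 - G 0) ^ 2 / (2 * σ2)) := by
    funext u
    have hqz := hq z.1
    simp only [densF, repFPath]
    rw [rep_eq' φ k0 k t β0 a0 b0 w0 qq β bb sv aa ww z.1 u, ← hGdef, ← hG0]
    have hden : (Real.sqrt (2 * Real.pi * σ2))⁻¹ *
        Real.exp (-(z.2 - G 0) ^ 2 / (2 * σ2)) * q z.1 ≠ 0 := by positivity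
    rw [div_eq_iff hden, Real.exp_sub, div_mul_eq_mul_div,
      eq_div_iff (Real.exp_ne_zero _)]
    ring
  have hExp : ∀ s, HasDerivAt
      (fun u : ℝ => Real.exp (-(z.2 - G u) ^ 2 / (2 * σ2) - -(z.2 - G 0) ^ 2 / (2 * σ2)))
      (Real.exp (-(z.2 - G s) ^ 2 / (2 * σ2) - -(z.2 - G 0) ^ 2 / (2 * σ2)) *
        ((z.2 - G s) * G1 s / σ2)) s := by
    intro s
    have h1 : HasDerivAt
        (fun u : ℝ => -(z.2 - G u) ^ 2 / (2 * σ2) - -(z.2 - G 0) ^ 2 / (2 * σ2))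
        ((z.2 - G s) * G1 s / σ2) s := by
      have h0 := ((((hG s).const_sub z.2).pow 2).neg).div_const (2 * σ2)
      have h0' := h0.sub_const (-(z.2 - G 0) ^ 2 / (2 * σ2))
      refine h0'.congr_deriv ?_
      field_simp
      ring
    exact (Real.hasDerivAt_exp _).comp s h1
  have hR : ∀ s, HasDerivAt
      (fun u => densF σ2 q (repFPath φ k0 k t β0 a0 b0 w0 qq β bb sv aa ww u) z /
        densF σ2 q (trueF φ k0 β0 a0 b0 w0) z)
      (Real.exp (-(z.2 - G s) ^ 2 / (2 * σ2) - -(z.2 - G 0) ^ 2 / (2 * σ2)) *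
        ((z.2 - G s) * G1 s / σ2)) s := by
    intro s
    rw [key]
    exact hExp s
  refine ⟨fun s => (hR s).differentiableAt, ?_⟩
  have hdr : deriv (fun u => densF σ2 q (repFPath φ k0 k t β0 a0 b0 w0 qq β bb sv aa ww u) z /
      densF σ2 q (trueF φ k0 β0 a0 b0 w0) z) =
      fun s => Real.exp (-(z.2 - G s) ^ 2 / (2 * σ2) - -(z.2 - G 0) ^ 2 / (2 * σ2)) *
        ((z.2 - G s) * G1 s / σ2) :=
    funext fun s => (hR s).deriv
  rw [hdr]
  have hU : HasDerivAt (fun s => (z.2 - G s) * G1 s / σ2)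
      ((-G1 0 * G1 0 + (z.2 - G 0) * G2 0) / σ2) 0 :=
    (((hG 0).const_sub z.2).mul (hG1 0)).div_const σ2
  have hfinal := (hExp 0).mul hU
  refine hfinal.congr_deriv ?_
  rw [hG0, hG10, hG20] at *
  rw [sub_self, Real.exp_zero]
  field_simp
  ring
end
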